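/- Let k ∈ ℝ with |k| > 1 and κ = √(k² - 1). Then the function u(x,y) = -ln( cosh(k·x) + (κ/k)·cos(k·y) ) is a C² solution of the elliptic Liouville equation u_xx + u_yy + exp(2u) = 0 on the open set where cosh(k·x) + (κ/k)·cos(k·y) > 0 (in particular on all of ℝ² when k > 1). -/

import Mathlib

lemma hd1 (k a x : ℝ) (hx : 0 < Real.cosh (k * x) + a) :
    HasDerivAt (fun x' => -Real.log (Real.cosh (k * x') + a))
      (-(k * Real.sinh (k * x)) / (Real.cosh (k * x) + a)) x := by
  have h0 : HasDerivAt (fun x' : ℝ => k * x') k x := by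
    simpa using (hasDerivAt_id x).const_mul k
  have h1 : HasDerivAt (fun x' => Real.cosh (k * x') + a) (Real.sinh (k * x) * k) x :=
    ((Real.hasDerivAt_cosh (k * x)).comp x h0).add_const a
  have h2 := (h1.log hx.ne').neg
  exact h2.congr_deriv (by ring)

lemma hd2 (k a x : ℝ) (hx : 0 < Real.cosh (k * x) + a) :
    HasDerivAt (fun x' => -(k * Real.sinh (k * x')) / (Real.cosh (k * x') + a))
      ((-(k * (Real.cosh (k * x) * k)) * (Real.cosh (k * x) + a)
        - -(k * Real.sinh (k * x)) * (Real.sinh (k * x) * k))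
        / (Real.cosh (k * x) + a) ^ 2) x := by
  have h0 : HasDerivAt (fun x' : ℝ => k * x') k x := by
    simpa using (hasDerivAt_id x).const_mul k
  have hn : HasDerivAt (fun x' => -(k * Real.sinh (k * x'))) (-(k * (Real.cosh (k * x) * k))) x := by
    have := ((Real.hasDerivAt_sinh (k * x)).comp x h0).const_mul k
    exact this.neg.congr_deriv (by ring)
  have hden : HasDerivAt (fun x' => Real.cosh (k * x') + a) (Real.sinh (k * x) * k) x :=
    ((Real.hasDerivAt_cosh (k * x)).comp x h0).add_const a
  exact hn.div hden hx.ne'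

lemma hc1 (k b c y : ℝ) (hy : 0 < b + c * Real.cos (k * y)) :
    HasDerivAt (fun y' => -Real.log (b + c * Real.cos (k * y')))
      (-(c * (-Real.sin (k * y) * k)) / (b + c * Real.cos (k * y))) y := by
  have h0 : HasDerivAt (fun y' : ℝ => k * y') k y := by
    simpa using (hasDerivAt_id y).const_mul k
  have h1 : HasDerivAt (fun y' => b + c * Real.cos (k * y'))
      (c * (-Real.sin (k * y) * k)) y := by
    have := (((Real.hasDerivAt_cos (k * y)).comp y h0).const_mul c).const_add b
    simpa [mul_assoc] using this
  have h2 := (h1.log hy.ne').neg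
  exact h2.congr_deriv (by ring)

lemma hc2 (k b c y : ℝ) (hy : 0 < b + c * Real.cos (k * y)) :
    HasDerivAt (fun y' => -(c * (-Real.sin (k * y') * k)) / (b + c * Real.cos (k * y')))
      ((-(c * (-(Real.cos (k * y) * k) * k)) * (b + c * Real.cos (k * y))
        - -(c * (-Real.sin (k * y) * k)) * (c * (-Real.sin (k * y) * k)))
        / (b + c * Real.cos (k * y)) ^ 2) y := by
  have h0 : HasDerivAt (fun y' : ℝ => k * y') k y := by
    simpa using (hasDerivAt_id y).const_mul k
  have hn : HasDerivAt (fun y' => -(c * (-Real.sin (k * y') * k)))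
      (-(c * (-(Real.cos (k * y) * k) * k))) y := by
    have h3 : HasDerivAt (fun y' : ℝ => Real.sin (k * y')) (Real.cos (k * y) * k) y :=
      (Real.hasDerivAt_sin (k * y)).comp y h0
    have := ((h3.neg.const_mul k).const_mul c).neg
    convert this using 1
    · rfl
    · rfl
    · funext t; simp only [Pi.neg_apply]; ring
    · ring
  have hden : HasDerivAt (fun y' => b + c * Real.cos (k * y'))
      (c * (-Real.sin (k * y) * k)) y := by
    have := (((Real.hasDerivAt_cos (k * y)).comp y h0).const_mul c).const_add b
    simpa [mul_assoc] using this
  exact hn.div hden hy.ne'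

theorem cats_eyes_solves_liouville (k : ℝ) (hk : 1 < |k|) :
    let κ : ℝ := Real.sqrt (k ^ 2 - 1)
    let D : ℝ → ℝ → ℝ := fun x y => Real.cosh (k * x) + (κ / k) * Real.cos (k * y)
    let u : ℝ → ℝ → ℝ := fun x y => -Real.log (D x y)
    (ContDiffOn ℝ 2 (fun p : ℝ × ℝ => u p.1 p.2) {p : ℝ × ℝ | 0 < D p.1 p.2}) ∧
    (∀ x y : ℝ, 0 < D x y →
      deriv (deriv (fun x' : ℝ => u x' y)) x
        + deriv (deriv (fun y' : ℝ => u x y')) y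
        + Real.exp (2 * u x y) = 0) ∧
    (1 < k → ∀ x y : ℝ, 0 < D x y) := by
  intro κ D u
  have hk2 : 1 < k ^ 2 := by nlinarith [sq_abs k, abs_nonneg k]
  have hk0 : k ≠ 0 := by intro h; rw [h] at hk2; norm_num at hk2
  have hκ2 : κ ^ 2 = k ^ 2 - 1 := Real.sq_sqrt (by linarith)
  have hκ0 : 0 ≤ κ := Real.sqrt_nonneg _
  refine ⟨?_, ?_, ?_⟩
  · have hi : ContDiff ℝ 2 (fun p : ℝ × ℝ => Real.cosh (k * p.1) + κ / k * Real.cos (k * p.2)) := by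
      exact (Real.contDiff_cosh.comp (contDiff_const.mul contDiff_fst)).add
        (contDiff_const.mul (Real.contDiff_cos.comp (contDiff_const.mul contDiff_snd)))
    exact ((hi.contDiffOn.log (fun p hp => ne_of_gt hp)).neg)
  · intro x y hxy
    set c : ℝ := κ / k with hc
    set a : ℝ := c * Real.cos (k * y) with ha
    set b : ℝ := Real.cosh (k * x) with hb
    have hxy' : 0 < Real.cosh (k * x) + a := hxy
    have hxy'' : 0 < b + c * Real.cos (k * y) := hxy
    -- x-part
    have hopx : IsOpen {x' : ℝ | 0 < Real.cosh (k * x') + a} :=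
      isOpen_lt continuous_const (by fun_prop)
    have hevx : deriv (fun x' : ℝ => u x' y)
        =ᶠ[nhds x] fun x' => -(k * Real.sinh (k * x')) / (Real.cosh (k * x') + a) := by
      filter_upwards [hopx.mem_nhds hxy'] with x' hx' using (hd1 k a x' hx').deriv
    have e1 : deriv (deriv (fun x' : ℝ => u x' y)) x
        = (-(k * (Real.cosh (k * x) * k)) * (Real.cosh (k * x) + a)
            - -(k * Real.sinh (k * x)) * (Real.sinh (k * x) * k))
          / (Real.cosh (k * x) + a) ^ 2 := by
      rw [hevx.deriv_eq]; exact (hd2 k a x hxy').deriv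
    -- y-part
    have hopy : IsOpen {y' : ℝ | 0 < b + c * Real.cos (k * y')} :=
      isOpen_lt continuous_const (by fun_prop)
    have hevy : deriv (fun y' : ℝ => u x y')
        =ᶠ[nhds y] fun y' => -(c * (-Real.sin (k * y') * k)) / (b + c * Real.cos (k * y')) := by
      filter_upwards [hopy.mem_nhds hxy''] with y' hy' using (hc1 k b c y' hy').deriv
    have e2 : deriv (deriv (fun y' : ℝ => u x y')) y
        = (-(c * (-(Real.cos (k * y) * k) * k)) * (b + c * Real.cos (k * y))
            - -(c * (-Real.sin (k * y) * k)) * (c * (-Real.sin (k * y) * k)))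
          / (b + c * Real.cos (k * y)) ^ 2 := by
      rw [hevy.deriv_eq]; exact (hc2 k b c y hxy'').deriv
    have hexp : Real.exp (2 * u x y) = ((b + c * Real.cos (k * y)) ^ 2)⁻¹ := by
      show Real.exp (2 * -Real.log (b + c * Real.cos (k * y))) = _
      rw [mul_neg, Real.exp_neg]
      congr 1
      rw [show (2:ℝ) = ((2:ℕ):ℝ) by norm_num, Real.exp_nat_mul,
        Real.exp_log (by positivity)]
    rw [e1, e2, hexp]
    have hC := Real.cosh_sq_sub_sinh_sq (k * x)
    have hT := Real.sin_sq_add_cos_sq (k * y)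
    have hck : c ^ 2 * k ^ 2 = k ^ 2 - 1 := by
      rw [hc]; field_simp; linarith
    have hD0 : (b + c * Real.cos (k * y)) ≠ 0 := ne_of_gt hxy''
    have hab : Real.cosh (k * x) + a = b + c * Real.cos (k * y) := by rw [ha, hb]
    rw [hab]
    field_simp
    nlinarith [hC, hT, hck, sq_nonneg (b + c * Real.cos (k * y))]
  · intro hk1 x y
    have hκlt : κ < k := by nlinarith
    have hc0 : 0 ≤ κ / k := div_nonneg hκ0 (by linarith)
    have hc1' : κ / k < 1 := (div_lt_one (by linarith)).mpr hκlt
    have hcos := Real.neg_one_le_cos (k * y)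
    have h2 : -(κ / k) ≤ κ / k * Real.cos (k * y) := by nlinarith
    have h3 := Real.one_le_cosh (k * x)
    show 0 < Real.cosh (k * x) + κ / k * Real.cos (k * y)
    linarith
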